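/- For the ODE ã' = k₂·u(ã)·(ã − 1/2) with u(ã) = √(4ã(1−ã)+1) − 1 and k₂ > 0: if ã(0) = 1/2 + δ with δ ∈ (0, 1/2), then ã is strictly increasing and converges to 1 as t → ∞; if ã(0) = 1/2 − δ, then ã strictly decreases to 0; and ã ≡ 1/2 is an (unstable) equilibrium. -/

import Mathlib

open Filter Set

set_option maxHeartbeats 1000000 in
lemma lipF (k₂ : ℝ) (hk₂ : 0 < k₂) :
    LipschitzOnWith (Real.toNNReal (2 * k₂))
      (fun x : ℝ => k₂ * (Real.sqrt (4 * x * (1 - x) + 1) - 1) * (x - 1 / 2))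
      (Icc (1/2 : ℝ) 1) := by
  apply LipschitzOnWith.of_dist_le_mul
  intro x hx y hy
  rw [Real.dist_eq, Real.dist_eq, Real.coe_toNNReal _ (by positivity)]
  obtain ⟨hx1, hx2⟩ := hx
  obtain ⟨hy1, hy2⟩ := hy
  set p := 4 * x * (1 - x) + 1 with hp
  set q := 4 * y * (1 - y) + 1 with hq
  have hp1 : 1 ≤ p := by nlinarith
  have hp2 : p ≤ 2 := by nlinarith
  have hq1 : 1 ≤ q := by nlinarith
  have hq2 : q ≤ 2 := by nlinarith
  set sp := Real.sqrt p with hsp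
  set sq := Real.sqrt q with hsq
  have hsp2 : sp ^ 2 = p := Real.sq_sqrt (by linarith)
  have hsq2 : sq ^ 2 = q := Real.sq_sqrt (by linarith)
  have hsp0 : 0 ≤ sp := Real.sqrt_nonneg _
  have hsq0 : 0 ≤ sq := Real.sqrt_nonneg _
  have hsp1 : 1 ≤ sp := by nlinarith
  have hsq1 : 1 ≤ sq := by nlinarith
  have hspu : sp ≤ 3/2 := by nlinarith [sq_nonneg (sp - 3/2)]
  have hsqu : sq ≤ 3/2 := by nlinarith [sq_nonneg (sq - 3/2)]
  set d := |x - y| with hd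
  have hd0 : 0 ≤ d := abs_nonneg _
  have hgoal : ∀ G : ℝ, |G| ≤ 2 * d → k₂ * |G| ≤ 2 * k₂ * d := fun G hG => by
    nlinarith [abs_nonneg G]
  have hd1 : x - y ≤ d := le_abs_self _
  have hd2 : y - x ≤ d := by rw [hd, abs_sub_comm]; exact le_abs_self _
  clear_value sp sq d
  clear hsp hsq hd
  have hpq : p - q = 4 * (x - y) * (1 - x - y) := by rw [hp, hq]; ring
  clear_value p q
  clear hp hq
  have hkey : (sp - sq) * (sp + sq) = 4 * (x - y) * (1 - x - y) := by
    have h2 : (sp - sq) * (sp + sq) = sp ^ 2 - sq ^ 2 := by ring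
    rw [h2, hsp2, hsq2, hpq]
  have hprod : (x - y) * (1 - x - y) ≤ d ∧ (y - x) * (1 - x - y) ≤ d := by
    constructor
    · nlinarith [mul_nonneg (by linarith : (0:ℝ) ≤ d + (x - y)) (by linarith : (0:ℝ) ≤ x + y - 1),
        mul_nonneg hd0 (by linarith : (0:ℝ) ≤ 2 - x - y)]
    · nlinarith [mul_nonneg (by linarith : (0:ℝ) ≤ d + (y - x)) (by linarith : (0:ℝ) ≤ x + y - 1),
        mul_nonneg hd0 (by linarith : (0:ℝ) ≤ 2 - x - y)]
  have hsub : sp - sq ≤ 2 * d := by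
    rcases le_or_gt sp sq with h | h
    · linarith
    · nlinarith [mul_nonneg (by linarith : (0:ℝ) ≤ sp - sq) (by linarith : (0:ℝ) ≤ sp + sq - 2),
        hprod.1]
  have hsub' : sq - sp ≤ 2 * d := by
    rcases le_or_gt sq sp with h | h
    · linarith
    · nlinarith [mul_nonneg (by linarith : (0:ℝ) ≤ sq - sp) (by linarith : (0:ℝ) ≤ sp + sq - 2),
        hprod.2]
  have hG : (sp - 1) * (x - 1/2) - (sq - 1) * (y - 1/2) ≤ 2 * d ∧
      (sq - 1) * (y - 1/2) - (sp - 1) * (x - 1/2) ≤ 2 * d := by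
    constructor
    · nlinarith [mul_nonneg (by linarith : (0:ℝ) ≤ sp - 1) (by linarith : (0:ℝ) ≤ d - (x - y)),
        mul_nonneg (by linarith : (0:ℝ) ≤ 1/2 - (sp - 1)) hd0,
        mul_nonneg (by linarith : (0:ℝ) ≤ y - 1/2) (by linarith : (0:ℝ) ≤ 2 * d - (sp - sq)),
        mul_nonneg (by linarith : (0:ℝ) ≤ 1/2 - (y - 1/2)) (by linarith : (0:ℝ) ≤ 2 * d)]
    · nlinarith [mul_nonneg (by linarith : (0:ℝ) ≤ sq - 1) (by linarith : (0:ℝ) ≤ d - (y - x)),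
        mul_nonneg (by linarith : (0:ℝ) ≤ 1/2 - (sq - 1)) hd0,
        mul_nonneg (by linarith : (0:ℝ) ≤ x - 1/2) (by linarith : (0:ℝ) ≤ 2 * d - (sq - sp)),
        mul_nonneg (by linarith : (0:ℝ) ≤ 1/2 - (x - 1/2)) (by linarith : (0:ℝ) ≤ 2 * d)]
  have : |k₂ * (sp - 1) * (x - 1/2) - k₂ * (sq - 1) * (y - 1/2)|
      = k₂ * |(sp - 1) * (x - 1/2) - (sq - 1) * (y - 1/2)| := by
    rw [show k₂ * (sp - 1) * (x - 1/2) - k₂ * (sq - 1) * (y - 1/2)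
        = k₂ * ((sp - 1) * (x - 1/2) - (sq - 1) * (y - 1/2)) from by ring,
      abs_mul, abs_of_pos hk₂]
  rw [this]
  have habs : |(sp - 1) * (x - 1/2) - (sq - 1) * (y - 1/2)| ≤ 2 * d :=
    abs_le.mpr ⟨by linarith [hG.2], hG.1⟩
  exact hgoal _ habs

lemma slow_sqrt_pos {x : ℝ} (h1 : 1/2 < x) (h2 : x < 1) :
    1 < Real.sqrt (4 * x * (1 - x) + 1) := by
  have h4 : 1 < 4 * x * (1 - x) + 1 := by nlinarith
  nlinarith [Real.sq_sqrt (by nlinarith : (0:ℝ) ≤ 4 * x * (1 - x) + 1),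
    Real.sqrt_nonneg (4 * x * (1 - x) + 1)]

lemma slow_above (k₂ δ : ℝ) (hk₂ : 0 < k₂) (hδ : δ ∈ Set.Ioo (0 : ℝ) (1 / 2)) (a : ℝ → ℝ)
    (hode : ∀ t, HasDerivAt a
      (k₂ * (Real.sqrt (4 * a t * (1 - a t) + 1) - 1) * (a t - 1 / 2)) t)
    (h0 : a 0 = 1 / 2 + δ) :
    StrictMonoOn a (Set.Ici 0) ∧ Filter.Tendsto a Filter.atTop (nhds 1) := by
  obtain ⟨hδ0, hδ2⟩ := hδ
  have hcont : Continuous a := continuous_iff_continuousAt.mpr fun t => (hode t).continuousAt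
  have h0mem : a 0 ∈ Set.Ioo (1/2 : ℝ) 1 := by
    rw [h0]; constructor <;> [linarith; linarith]
  -- invariance
  have hinv : ∀ t, 0 ≤ t → a t ∈ Set.Ioo (1/2 : ℝ) 1 := by
    by_contra h; push_neg at h
    obtain ⟨t', ht'0, ht'⟩ := h
    set E : Set ℝ := Set.Ici 0 ∩ a ⁻¹' (Set.Ioo (1/2 : ℝ) 1)ᶜ with hE
    have hEclosed : IsClosed E :=
      isClosed_Ici.inter (isOpen_Ioo.isClosed_compl.preimage hcont)
    have hne : E.Nonempty := ⟨t', ht'0, ht'⟩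
    have hbdd : BddBelow E := ⟨0, fun t ht => ht.1⟩
    set t₁ := sInf E with ht₁
    have ht₁E : t₁ ∈ E := hEclosed.csInf_mem hne hbdd
    have ht₁0 : 0 ≤ t₁ := ht₁E.1
    have ht₁pos : 0 < t₁ := by
      rcases eq_or_lt_of_le ht₁0 with heq | h
      · exact absurd h0mem (heq ▸ ht₁E.2)
      · exact h
    have hIoo : ∀ s, 0 ≤ s → s < t₁ → a s ∈ Set.Ioo (1/2 : ℝ) 1 := by
      intro s hs0 hst
      by_contra hcon
      exact absurd (csInf_le hbdd ⟨hs0, hcon⟩) (not_le.mpr hst)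
    have hIcc1 : a t₁ ∈ Set.Icc (1/2 : ℝ) 1 := by
      have htend : Filter.Tendsto a (nhdsWithin t₁ (Set.Iio t₁)) (nhds (a t₁)) :=
        hcont.continuousAt.tendsto.mono_left nhdsWithin_le_nhds
      apply isClosed_Icc.mem_of_tendsto htend
      filter_upwards [Ioo_mem_nhdsLT_of_mem (Set.mem_Ioc.mpr ⟨ht₁pos, le_refl t₁⟩)] with s hs
      exact Set.Ioo_subset_Icc_self (hIoo s hs.1.le hs.2)
    have hIcc : ∀ s ∈ Set.Icc (0:ℝ) t₁, a s ∈ Set.Icc (1/2 : ℝ) 1 := by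
      intro s hs
      rcases eq_or_lt_of_le hs.2 with heq | h
      · rw [heq]; exact hIcc1
      · exact Set.Ioo_subset_Icc_self (hIoo s hs.1 h)
    have hb : a t₁ = 1/2 ∨ a t₁ = 1 := by
      rcases eq_or_lt_of_le hIcc1.1 with h | h
      · exact Or.inl h.symm
      rcases eq_or_lt_of_le hIcc1.2 with h' | h'
      · exact Or.inr h'
      exact absurd ⟨h, h'⟩ ht₁E.2
    have hFzero : k₂ * (Real.sqrt (4 * a t₁ * (1 - a t₁) + 1) - 1) * (a t₁ - 1/2) = 0 := by
      rcases hb with h | h <;> rw [h] <;> norm_num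
    have hEq := ODE_solution_unique_of_mem_Icc_left
      (v := fun _ x => k₂ * (Real.sqrt (4 * x * (1 - x) + 1) - 1) * (x - 1/2))
      (s := fun _ => Set.Icc (1/2 : ℝ) 1) (K := Real.toNNReal (2 * k₂))
      (fun _ _ => lipF k₂ hk₂)
      (f := a) (g := fun _ => a t₁) (a := 0) (b := t₁)
      hcont.continuousOn
      (fun t _ => (hode t).hasDerivWithinAt)
      (fun t ht => hIcc t ⟨ht.1.le, ht.2⟩)
      continuousOn_const
      (fun t _ => by
        have hcst := hasDerivWithinAt_const t (Set.Iic t) (a t₁)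
        rw [← hFzero] at hcst; exact hcst)
      (fun t _ => hIcc1)
      rfl
    have h01 : a 0 = a t₁ := hEq (Set.mem_Icc.mpr ⟨le_refl 0, ht₁0⟩)
    rcases hb with h | h <;> rw [h] at h01 <;> rw [h0] at h01 <;> linarith
  -- strict monotonicity
  have hmono : StrictMonoOn a (Set.Ici 0) := by
    apply strictMonoOn_of_deriv_pos (convex_Ici 0) hcont.continuousOn
    intro t ht
    rw [interior_Ici] at ht
    rw [(hode t).deriv]
    obtain ⟨h1, h2⟩ := hinv t ht.le
    have := slow_sqrt_pos h1 h2
    apply mul_pos (mul_pos hk₂ (by linarith)) (by linarith)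
  refine ⟨hmono, ?_⟩
  -- limit
  set L := sSup (a '' Set.Ici 0) with hL
  have himg : (a '' Set.Ici 0).Nonempty := ⟨a 0, 0, Set.self_mem_Ici, rfl⟩
  have hbddA : BddAbove (a '' Set.Ici 0) := by
    refine ⟨1, ?_⟩; rintro _ ⟨t, ht, rfl⟩; exact (hinv t ht).2.le
  have hle : ∀ t, 0 ≤ t → a t ≤ L := fun t ht => le_csSup hbddA ⟨t, ht, rfl⟩
  have hL1 : L ≤ 1 := csSup_le himg (by rintro _ ⟨t, ht, rfl⟩; exact (hinv t ht).2.le)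
  have hL0 : 1/2 + δ ≤ L := h0 ▸ hle 0 le_rfl
  have htendL : Filter.Tendsto a Filter.atTop (nhds L) := by
    rw [tendsto_order]
    constructor
    · intro l hl
      obtain ⟨_, ⟨t₀, ht₀, rfl⟩, hlt⟩ := exists_lt_of_lt_csSup himg hl
      filter_upwards [Filter.eventually_ge_atTop t₀] with t ht
      exact lt_of_lt_of_le hlt (hmono.monotoneOn ht₀ (Set.mem_Ici.mpr (le_trans ht₀ ht)) ht)
    · intro u hu
      filter_upwards [Filter.eventually_ge_atTop 0] with t ht
      exact lt_of_le_of_lt (hle t ht) hu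
  have hLeq : L = 1 := by
    by_contra hne
    have hL1' : L < 1 := lt_of_le_of_ne hL1 hne
    have hLhalf : 1/2 < L := by linarith
    set c := Real.sqrt (4 * L * (1 - L) + 1) - 1 with hc
    have hcpos : 0 < c := sub_pos.mpr (slow_sqrt_pos hLhalf hL1')
    set m := k₂ * c * δ with hm
    have hmpos : 0 < m := mul_pos (mul_pos hk₂ hcpos) hδ0
    have hder : ∀ t, 0 ≤ t →
        m ≤ k₂ * (Real.sqrt (4 * a t * (1 - a t) + 1) - 1) * (a t - 1/2) := by
      intro t ht
      have ha1 : 1/2 + δ ≤ a t := by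
        have := hmono.monotoneOn (Set.self_mem_Ici) (Set.mem_Ici.mpr ht) ht
        rw [h0] at this; exact this
      have ha2 : a t ≤ L := hle t ht
      have hsqge : Real.sqrt (4 * L * (1 - L) + 1) ≤
          Real.sqrt (4 * a t * (1 - a t) + 1) :=
        Real.sqrt_le_sqrt (by nlinarith)
      have hc1 : c ≤ Real.sqrt (4 * a t * (1 - a t) + 1) - 1 := by rw [hc]; linarith
      have hd1 : δ ≤ a t - 1/2 := by linarith
      have := mul_le_mul hc1 hd1 hδ0.le (by linarith)
      calc m = k₂ * (c * δ) := by rw [hm]; ring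
        _ ≤ k₂ * ((Real.sqrt (4 * a t * (1 - a t) + 1) - 1) * (a t - 1/2)) :=
            mul_le_mul_of_nonneg_left this hk₂.le
        _ = k₂ * (Real.sqrt (4 * a t * (1 - a t) + 1) - 1) * (a t - 1/2) := by ring
    have hmon2 : MonotoneOn (fun t => a t - m * t) (Set.Ici (0:ℝ)) := by
      apply monotoneOn_of_deriv_nonneg (convex_Ici 0)
        (hcont.sub (continuous_const.mul continuous_id)).continuousOn
        (fun t ht => ((hode t).sub ((hasDerivAt_id t).const_mul m)).differentiableAt.differentiableWithinAt)
      intro t ht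
      rw [interior_Ici] at ht
      rw [show deriv (a - (fun x => k₂ * c * δ) * id) t = _ from ((hode t).sub ((hasDerivAt_id t).const_mul m)).deriv]
      have := hder t ht.le
      simp only [mul_one]
      linarith
    have hg : ∀ t, 0 ≤ t → a 0 + m * t ≤ a t := by
      intro t ht
      have := hmon2 Set.self_mem_Ici (Set.mem_Ici.mpr ht) ht
      simp only [mul_zero, sub_zero] at this
      linarith
    set T := (L - a 0) / m + 1 with hT
    have hT0 : 0 ≤ T := by
      have h4 : 0 ≤ (L - a 0) / m := div_nonneg (by rw [h0]; linarith) hmpos.le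
      rw [hT]; linarith
    have h1 := hg T hT0
    have h2 := hle T hT0
    have h3 : m * T = (L - a 0) + m := by
      rw [hT]; field_simp
    linarith
  rw [← hLeq]; exact htendL


/-- For the slow approximate-majority dynamics
`ã' = k₂ u(ã)(ã − 1/2)` with `u(ã) = √(4ã(1−ã)+1) − 1`:
starting above `1/2` the solution strictly increases to `1`, starting below
`1/2` it strictly decreases to `0`, and `ã ≡ 1/2` is an equilibrium. -/
theorem slow_am_dynamics (k₂ δ : ℝ) (hk₂ : 0 < k₂) (hδ : δ ∈ Set.Ioo (0 : ℝ) (1 / 2))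
    (a : ℝ → ℝ)
    (hode : ∀ t, HasDerivAt a
      (k₂ * (Real.sqrt (4 * a t * (1 - a t) + 1) - 1) * (a t - 1 / 2)) t) :
    (a 0 = 1 / 2 + δ → StrictMonoOn a (Set.Ici 0) ∧ Tendsto a atTop (nhds 1)) ∧
    (a 0 = 1 / 2 - δ → StrictAntiOn a (Set.Ici 0) ∧ Tendsto a atTop (nhds 0)) ∧
    (∀ t : ℝ, HasDerivAt (fun _ : ℝ => (1 / 2 : ℝ))
      (k₂ * (Real.sqrt (4 * (1 / 2 : ℝ) * (1 - 1 / 2) + 1) - 1) * ((1 / 2 : ℝ) - 1 / 2)) t) := by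
  refine ⟨fun h0 => slow_above k₂ δ hk₂ hδ a hode h0, fun h0 => ?_, fun t => ?_⟩
  · set b : ℝ → ℝ := fun t => 1 - a t with hb
    have hodeb : ∀ t, HasDerivAt b
        (k₂ * (Real.sqrt (4 * b t * (1 - b t) + 1) - 1) * (b t - 1 / 2)) t := by
      intro t
      have h := (hode t).const_sub 1
      have harg : 4 * b t * (1 - b t) + 1 = 4 * a t * (1 - a t) + 1 := by rw [hb]; ring
      have hval : k₂ * (Real.sqrt (4 * b t * (1 - b t) + 1) - 1) * (b t - 1 / 2)
          = -(k₂ * (Real.sqrt (4 * a t * (1 - a t) + 1) - 1) * (a t - 1 / 2)) := by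
        rw [harg, hb]; ring
      rw [hval]; exact h
    have hb0 : b 0 = 1 / 2 + δ := by rw [hb]; simp only; rw [h0]; ring
    obtain ⟨hmono, htend⟩ := slow_above k₂ δ hk₂ hδ b hodeb hb0
    constructor
    · intro x hx y hy hxy
      have := hmono hx hy hxy
      simp only [hb] at this
      linarith
    · have h1 : Tendsto (fun t => 1 - b t) atTop (nhds (1 - 1)) :=
        tendsto_const_nhds.sub htend
      have h2 : (fun t => 1 - b t) = a := by funext t; rw [hb]; ring
      rw [h2] at h1; simpa using h1
  · have : k₂ * (Real.sqrt (4 * (1 / 2 : ℝ) * (1 - 1 / 2) + 1) - 1) * ((1 / 2 : ℝ) - 1 / 2)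
        = 0 := by ring
    rw [this]; exact hasDerivAt_const t _
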